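/- With λ̄^max = (λ_1,...,λ_k) ∈ 𝒫⁺(λ,k) as constructed from the division algorithm (λ_j = Σ_i m^{i,j} ε_i, m^{i,j} = p_i + [j ≤ r_i] where Σ_{ℓ≥i} a_ℓ = p_i k + r_i), every μ̄ ∈ 𝒫⁺(λ,k) satisfies μ̄ ⊴ λ̄^max; moreover if μ̄ ∼ λ̄^max then μ̄ is a permutation of λ̄^max. -/

import Mathlib

/-- `orderR lam i j ℓ`: minimum over `ℓ`-element subsets `S ⊆ {1,…,k}` of
`∑_{t ∈ S} ∑_{s=i}^{j} (λ_t)_s`. -/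
noncomputable def orderR {n k : ℕ} (lam : Fin k → Fin n → ℕ) (i j : Fin n) (ℓ : ℕ) : ℕ :=
  sInf {m : ℕ | ∃ S : Finset (Fin k), S.card = ℓ ∧
    m = ∑ t ∈ S, ∑ s ∈ Finset.Icc i j, lam t s}

open Finset

/-- minimum of sums of `f` over `ℓ`-element subsets -/
noncomputable def minSub {k : ℕ} (f : Fin k → ℕ) (ℓ : ℕ) : ℕ :=
  sInf {m : ℕ | ∃ S : Finset (Fin k), S.card = ℓ ∧ m = ∑ t ∈ S, f t}

lemma orderR_eq_minSub {n k : ℕ} (lam : Fin k → Fin n → ℕ) (i j : Fin n) (ℓ : ℕ) :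
    orderR lam i j ℓ = minSub (fun t => ∑ s ∈ Finset.Icc i j, lam t s) ℓ := rfl

lemma minSub_le {k : ℕ} (f : Fin k → ℕ) {ℓ : ℕ} (S : Finset (Fin k)) (h : S.card = ℓ) :
    minSub f ℓ ≤ ∑ t ∈ S, f t :=
  Nat.sInf_le ⟨S, h, rfl⟩

lemma minSub_nonempty {k : ℕ} (f : Fin k → ℕ) {ℓ : ℕ} (hℓ : ℓ ≤ k) :
    {m : ℕ | ∃ S : Finset (Fin k), S.card = ℓ ∧ m = ∑ t ∈ S, f t}.Nonempty := by
  obtain ⟨S, -, hS⟩ := Finset.exists_subset_card_eq (s := (univ : Finset (Fin k))) (n := ℓ) (by simpa using hℓ)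
  exact ⟨∑ t ∈ S, f t, S, hS, rfl⟩

lemma le_minSub {k : ℕ} (f : Fin k → ℕ) {ℓ : ℕ} (hℓ : ℓ ≤ k) (c : ℕ)
    (h : ∀ S : Finset (Fin k), S.card = ℓ → c ≤ ∑ t ∈ S, f t) : c ≤ minSub f ℓ := by
  refine le_csInf (minSub_nonempty f hℓ) ?_
  rintro m ⟨S, hS, rfl⟩; exact h S hS

lemma card_filter_val_lt {k r : ℕ} (hr : r ≤ k) :
    ((univ : Finset (Fin k)).filter (fun t : Fin k => (t : ℕ) < r)).card = r := by
  have : (univ : Finset (Fin k)).filter (fun t : Fin k => (t : ℕ) < r)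
      = Finset.map (Fin.castLEEmb hr) univ := by
    ext t
    simp only [mem_filter, mem_univ, true_and, Finset.mem_map]
    constructor
    · intro h
      exact ⟨⟨t, h⟩, by simp [Fin.castLEEmb, Fin.ext_iff]⟩
    · rintro ⟨u, -, rfl⟩; simp [Fin.castLEEmb]
  rw [this, Finset.card_map, Finset.card_univ, Fintype.card_fin]

/-- the balanced value function -/
def mval (k b : ℕ) (t : Fin k) : ℕ := b / k + if (t : ℕ) < b % k then 1 else 0

lemma sum_mval {k : ℕ} (hk : 0 < k) (b : ℕ) : ∑ t : Fin k, mval k b t = b := by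
  unfold mval
  rw [Finset.sum_add_distrib, Finset.sum_const, Finset.card_univ, Fintype.card_fin,
    smul_eq_mul]
  have h1 : (∑ t : Fin k, if (t : ℕ) < b % k then 1 else 0)
      = ((univ : Finset (Fin k)).filter (fun t : Fin k => (t : ℕ) < b % k)).card := by
    simpa using Finset.sum_boole (fun t : Fin k => (t : ℕ) < b % k) univ
  rw [h1, card_filter_val_lt (le_of_lt (Nat.mod_lt _ hk))]
  exact Nat.div_add_mod b k

lemma mval_formula {k : ℕ} (hk : 0 < k) (b : ℕ) (t : Fin k) :
    mval k b t = (b + (k - 1 - (t : ℕ))) / k := by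
  unfold mval
  have hb : b = k * (b / k) + b % k := (Nat.div_add_mod b k).symm
  have ht : (t : ℕ) < k := t.isLt
  have hbk : b % k < k := Nat.mod_lt _ hk
  conv_rhs => rw [hb]
  rw [add_assoc, Nat.mul_add_div hk]
  congr 1
  rcases lt_or_ge (t : ℕ) (b % k) with h | h
  · rw [if_pos h]
    exact (Nat.div_eq_of_lt_le (by omega) (by omega)).symm
  · rw [if_neg (by omega)]
    exact (Nat.div_eq_of_lt (by omega)).symm

/-- balanced values differ by at most 1 under adding T to b -/
lemma mval_between {k : ℕ} (hk : 0 < k) (b T : ℕ) (t : Fin k) :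
    mval k b t + T / k ≤ mval k (b + T) t ∧ mval k (b + T) t ≤ mval k b t + T / k + 1 := by
  rw [mval_formula hk b t, mval_formula hk (b + T) t]
  set c := k - 1 - (t : ℕ)
  have h : (b + T + c) / k = (b + c) / k + T / k
      + if k ≤ (b + c) % k + T % k then 1 else 0 := by
    rw [show b + T + c = (b + c) + T by ring, Nat.add_div hk]
  split at h <;> omega

section MinSub
variable {k : ℕ}

lemma balanced_decomp {f : Fin k → ℕ} {q r : ℕ} (hk : 0 < k) (hr : r < k)
    (hlow : ∀ t, q ≤ f t) (hhigh : ∀ t, f t ≤ q + 1) (hsum : ∑ t, f t = q * k + r) :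
    ((univ : Finset (Fin k)).filter (fun t => f t = q + 1)).card = r ∧
      ∀ t, f t = q + (if f t = q + 1 then 1 else 0) := by
  have hpt : ∀ t, f t = q + (if f t = q + 1 then 1 else 0) := by
    intro t; have h1 := hlow t; have h2 := hhigh t; split <;> omega
  constructor
  · have h0 : ∑ t, f t = ∑ t : Fin k, (q + (if f t = q + 1 then 1 else 0)) :=
      Finset.sum_congr rfl (fun t _ => hpt t)
    rw [Finset.sum_add_distrib, Finset.sum_const, Finset.card_univ, Fintype.card_fin,
      smul_eq_mul, hsum] at h0
    have hb : (∑ t : Fin k, if f t = q + 1 then 1 else 0)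
        = ((univ : Finset (Fin k)).filter (fun t => f t = q + 1)).card := by
      simpa using Finset.sum_boole (fun t : Fin k => f t = q + 1) univ
    rw [hb] at h0
    have hc : k * q = q * k := Nat.mul_comm k q
    omega
  · exact hpt

lemma sum_subset_balanced {f : Fin k → ℕ} {q : ℕ} (S : Finset (Fin k))
    (hpt : ∀ t, f t = q + (if f t = q + 1 then 1 else 0)) :
    ∑ t ∈ S, f t = S.card * q + (S ∩ (univ.filter (fun t => f t = q + 1))).card := by
  have h0 : ∑ t ∈ S, f t = ∑ t ∈ S, (q + (if f t = q + 1 then 1 else 0)) :=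
    Finset.sum_congr rfl (fun t _ => hpt t)
  rw [h0, Finset.sum_add_distrib, Finset.sum_const, smul_eq_mul]
  congr 1
  have hb : (∑ t ∈ S, if f t = q + 1 then 1 else 0)
      = (S.filter (fun t => f t = q + 1)).card := by
    simpa using Finset.sum_boole (fun t : Fin k => f t = q + 1) S
  rw [hb]
  congr 1
  ext t; simp [Finset.mem_filter, Finset.mem_inter]

lemma minSub_balanced {f : Fin k → ℕ} {q r : ℕ} (hk : 0 < k) (hr : r < k)
    (hlow : ∀ t, q ≤ f t) (hhigh : ∀ t, f t ≤ q + 1) (hsum : ∑ t, f t = q * k + r)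
    {ℓ : ℕ} (hl1 : 1 ≤ ℓ) (hlk : ℓ ≤ k) :
    minSub f ℓ = ℓ * q + (ℓ + r - k) := by
  obtain ⟨hcard, hpt⟩ := balanced_decomp hk hr hlow hhigh hsum
  set Big := (univ : Finset (Fin k)).filter (fun t => f t = q + 1) with hBig
  have hcardc : Bigᶜ.card = k - r := by
    rw [Finset.card_compl, hcard, Fintype.card_fin]
  apply le_antisymm
  · rcases le_or_gt ℓ (k - r) with h | h
    · obtain ⟨S, hSsub, hScard⟩ :=
        Finset.exists_subset_card_eq (s := Bigᶜ) (n := ℓ) (by omega)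
      refine le_trans (minSub_le f S hScard) ?_
      rw [sum_subset_balanced S hpt, hScard]
      have hSB : S ∩ Big = ∅ := by
        rw [Finset.eq_empty_iff_forall_notMem]
        intro t ht
        rcases Finset.mem_inter.mp ht with ⟨h1, h2⟩
        exact (Finset.mem_compl.mp (hSsub h1)) h2
      rw [hSB, Finset.card_empty]
      exact Nat.le_add_right _ _
    · obtain ⟨S, hSsub, -, hScard⟩ :=
        Finset.exists_subsuperset_card_eq (n := ℓ) (Finset.subset_univ Bigᶜ)
          (by omega) (by simp [hlk])
      refine le_trans (minSub_le f S hScard) ?_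
      rw [sum_subset_balanced S hpt, hScard]
      have hint : (S ∩ Big).card = ℓ - (k - r) := by
        have h1 : S ∩ Big = S \ Bigᶜ := by
          ext t; simp [Finset.mem_inter, Finset.mem_sdiff]
        rw [h1, Finset.card_sdiff_of_subset hSsub, hScard, hcardc]
      rw [hint]
      omega
  · apply le_minSub f hlk
    intro S hS
    rw [sum_subset_balanced S hpt, hS, ← hBig]
    have h1 : (S ∪ Big).card + (S ∩ Big).card = S.card + Big.card :=
      Finset.card_union_add_card_inter S Big
    have h2 : (S ∪ Big).card ≤ k := by
      refine le_trans (Finset.card_le_card (Finset.subset_univ _)) ?_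
      simp
    rw [hS, hcard] at h1
    omega

/-- upper bound on minSub for an arbitrary function with given total -/
lemma minSub_le_of_sum {f : Fin k → ℕ} {q r : ℕ} (hk : 0 < k) (hr : r < k)
    (hsum : ∑ t, f t = q * k + r) {ℓ : ℕ} (hl1 : 1 ≤ ℓ) (hlk : ℓ ≤ k) :
    minSub f ℓ ≤ ℓ * q + (ℓ + r - k) := by
  by_contra hcon
  push_neg at hcon
  obtain ⟨S, hScard, hSsum0⟩ := Nat.sInf_mem (minSub_nonempty f hlk)
  have hSsum : minSub f ℓ = ∑ t ∈ S, f t := hSsum0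
  have hmin : ∀ S' : Finset (Fin k), S'.card = ℓ → minSub f ℓ ≤ ∑ t ∈ S', f t :=
    fun S' h => minSub_le f S' h
  have hbig : ∃ s ∈ S, q + 1 ≤ f s := by
    by_contra hall
    push_neg at hall
    have h0 : ∑ t ∈ S, f t ≤ S.card • q :=
      Finset.sum_le_card_nsmul S f q (fun t ht => by have := hall t ht; omega)
    rw [hScard, smul_eq_mul] at h0
    omega
  obtain ⟨s, hsS, hfs⟩ := hbig
  have houts : ∀ t, t ∉ S → f s ≤ f t := by
    intro t htS
    have hnot : t ∉ S.erase s := fun hmem => htS (Finset.mem_of_mem_erase hmem)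
    have hcard' : (insert t (S.erase s)).card = ℓ := by
      rw [Finset.card_insert_of_notMem hnot, Finset.card_erase_of_mem hsS, hScard]
      omega
    have h5 : ∑ u ∈ insert t (S.erase s), f u = f t + ∑ u ∈ S.erase s, f u :=
      Finset.sum_insert hnot
    have h6 : f s + ∑ u ∈ S.erase s, f u = ∑ u ∈ S, f u :=
      Finset.add_sum_erase S f hsS
    have h3 := hmin _ hcard'
    omega
  have hcompl : (k - ℓ) * (q + 1) ≤ ∑ t ∈ Sᶜ, f t := by
    have h0 := Finset.card_nsmul_le_sum Sᶜ f (q + 1)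
      (fun t ht => le_trans hfs (houts t (Finset.mem_compl.mp ht)))
    rw [Finset.card_compl, hScard, Fintype.card_fin, smul_eq_mul] at h0
    exact h0
  have htot : ∑ t ∈ S, f t + ∑ t ∈ Sᶜ, f t = q * k + r := by
    rw [Finset.sum_add_sum_compl, hsum]
  obtain ⟨d, rfl⟩ : ∃ d, k = ℓ + d := ⟨k - ℓ, by omega⟩
  have hd : ℓ + d - ℓ = d := by omega
  rw [hd] at hcompl
  have e1 : q * (ℓ + d) = q * ℓ + q * d := by ring
  have e2 : d * (q + 1) = q * d + d := by ring
  have e3 : ℓ * q = q * ℓ := by ring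
  omega

/-- pointwise bounds from knowing all the minima -/
lemma pointwise_of_minSub {f : Fin k → ℕ} {q r : ℕ} (hk : 0 < k) (hr : r < k)
    (hsum : ∑ t, f t = q * k + r)
    (h : ∀ ℓ, 1 ≤ ℓ → ℓ ≤ k → minSub f ℓ = ℓ * q + (ℓ + r - k)) :
    ∀ t, q ≤ f t ∧ f t ≤ q + 1 := by
  intro t
  have hlow : q ≤ f t := by
    have h1 := h 1 le_rfl (by omega)
    have h2 : minSub f 1 ≤ f t := by
      have := minSub_le f (ℓ := 1) {t} (Finset.card_singleton t)
      simpa using this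
    omega
  refine ⟨hlow, ?_⟩
  rcases Nat.lt_or_ge k 2 with hk2 | hk2
  · -- k = 1
    have hkeq : k = 1 := by omega
    subst hkeq
    have h1 : f t ≤ ∑ u : Fin 1, f u := Finset.single_le_sum (fun u _ => Nat.zero_le _)
      (Finset.mem_univ t)
    omega
  · have hce : ({t}ᶜ : Finset (Fin k)).card = k - 1 := by
      rw [Finset.card_compl]; simp
    have h2 := minSub_le f ({t}ᶜ) hce
    have h3 := h (k - 1) (by omega) (by omega)
    rw [h3] at h2
    have h4 : f t + ∑ u ∈ ({t}ᶜ : Finset (Fin k)), f u = q * k + r := by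
      rw [show f t = ∑ u ∈ ({t} : Finset (Fin k)), f u by simp, Finset.sum_add_sum_compl,
        hsum]
    obtain ⟨d, rfl⟩ : ∃ d, k = 1 + d := ⟨k - 1, by omega⟩
    have hd : 1 + d - 1 = d := by omega
    rw [hd] at h2
    have e1 : q * (1 + d) = q + q * d := by ring
    have e2 : d * q = q * d := by ring
    omega

end MinSub

/-- telescoping sums of truncated differences for an antitone function -/
lemma tele_nat (g : ℕ → ℕ) (hg : ∀ s, g (s + 1) ≤ g s) :
    ∀ e i : ℕ, i ≤ e → (∑ s ∈ Finset.Ico i e, (g s - g (s + 1))) + g e = g i := by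
  intro e
  induction e with
  | zero => intro i hi; interval_cases i; simp
  | succ e ih =>
    intro i hi
    rcases Nat.lt_or_ge i (e + 1) with h | h
    · have hie : i ≤ e := by omega
      rw [Finset.sum_Ico_succ_top hie]
      have h1 := ih i hie
      have h2 := hg e
      omega
    · have : i = e + 1 := by omega
      subst this
      simp

/-- transfer sum over a Fin `Icc` to a sum over a ℕ `Ico` -/
lemma sum_Icc_fin {n : ℕ} (F : ℕ → ℕ) (i j : Fin n) :
    ∑ s ∈ Finset.Icc i j, F (s : ℕ) = ∑ u ∈ Finset.Ico (i : ℕ) ((j : ℕ) + 1), F u := by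
  rw [Finset.Ico_add_one_right_eq_Icc, ← Fin.map_valEmbedding_Icc, Finset.sum_map]
  rfl

/-- tail sums of a k × n array -/
def Mt {n k : ℕ} (mu : Fin k → Fin n → ℕ) (e : ℕ) (t : Fin k) : ℕ :=
  ∑ s ∈ Finset.univ.filter (fun s : Fin n => e ≤ (s : ℕ)), mu t s

lemma Mt_ge (n k : ℕ) (mu : Fin k → Fin n → ℕ) (t : Fin k) : Mt mu n t = 0 := by
  unfold Mt
  rw [Finset.filter_false_of_mem, Finset.sum_empty]
  intro s _
  simp only [not_le]
  exact s.isLt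

lemma Mt_split {n k : ℕ} (mu : Fin k → Fin n → ℕ) (t : Fin k) {e e' : ℕ} (h : e ≤ e') :
    Mt mu e t = (∑ s ∈ Finset.univ.filter (fun s : Fin n => e ≤ (s : ℕ) ∧ (s : ℕ) < e'), mu t s)
      + Mt mu e' t := by
  unfold Mt
  rw [← Finset.sum_filter_add_sum_filter_not
    (Finset.univ.filter (fun s : Fin n => e ≤ (s : ℕ))) (fun s => (s : ℕ) < e')]
  congr 1
  · congr 1
    rw [Finset.filter_filter]
  · congr 1
    rw [Finset.filter_filter]
    apply Finset.filter_congr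
    intro s _
    simp only [not_lt]
    constructor
    · rintro ⟨_, h2⟩; omega
    · intro h1; omega

lemma Icc_eq_filter {n : ℕ} (i j : Fin n) :
    Finset.Icc i j = Finset.univ.filter (fun s : Fin n => (i : ℕ) ≤ (s : ℕ) ∧ (s : ℕ) ≤ (j : ℕ)) := by
  ext s
  simp only [Finset.mem_Icc, Finset.mem_filter, Finset.mem_univ, true_and, Fin.le_def]

/-- permutation ranking elements by an injective key -/
lemma rank_perm {k : ℕ} (key : Fin k → ℕ) (hinj : Function.Injective key) :
    ∃ σ : Equiv.Perm (Fin k), ∀ t,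
      (σ t : ℕ) = (Finset.univ.filter (fun t' => key t' < key t)).card := by
  have hlt : ∀ t : Fin k, (Finset.univ.filter (fun t' => key t' < key t)).card < k := by
    intro t
    have h1 : (Finset.univ.filter (fun t' => key t' < key t)) ⊆ Finset.univ.erase t := by
      intro u hu
      rw [Finset.mem_erase]
      rcases Finset.mem_filter.mp hu with ⟨-, h2⟩
      exact ⟨fun he => by subst he; omega, Finset.mem_univ u⟩
    have h2 := Finset.card_le_card h1
    rw [Finset.card_erase_of_mem (Finset.mem_univ t), Finset.card_univ, Fintype.card_fin] at h2
    have hk : 0 < k := Fin.pos t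
    omega
  set g : Fin k → Fin k := fun t => ⟨_, hlt t⟩ with hg
  have hmono : ∀ t t', key t < key t' → (g t : ℕ) < (g t' : ℕ) := by
    intro t t' hklt
    have hss : (Finset.univ.filter (fun u => key u < key t))
        ⊂ (Finset.univ.filter (fun u => key u < key t')) := by
      constructor
      · intro u hu
        rw [Finset.mem_filter] at hu ⊢
        exact ⟨hu.1, lt_trans hu.2 hklt⟩
      · intro hsub
        have := hsub (Finset.mem_filter.mpr ⟨Finset.mem_univ t, hklt⟩)
        rw [Finset.mem_filter] at this
        omega
    exact Finset.card_lt_card hss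
  have hginj : Function.Injective g := by
    intro t t' he
    by_contra hne
    rcases Nat.lt_or_ge (key t) (key t') with h | h
    · have := hmono t t' h; rw [he] at this; omega
    · rcases Nat.lt_or_ge (key t') (key t) with h2 | h2
      · have := hmono t' t h2; rw [he] at this; omega
      · exact hne (hinj (by omega))
  refine ⟨Equiv.ofBijective g (Finite.injective_iff_bijective.mp hginj), fun t => rfl⟩

lemma mval_mono {k : ℕ} (hk : 0 < k) {b b' : ℕ} (h : b ≤ b') (t : Fin k) :
    mval k b t ≤ mval k b' t := by
  rw [mval_formula hk, mval_formula hk]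
  exact Nat.div_le_div_right (by omega)

lemma div_mod_of {k b q r : ℕ} (hk : 0 < k) (h : b = q * k + r) (hr : r < k) :
    b / k = q ∧ b % k = r := by
  subst h
  constructor
  · rw [mul_comm, Nat.mul_add_div hk, Nat.div_eq_of_lt hr, add_zero]
  · rw [mul_comm, Nat.mul_add_mod, Nat.mod_eq_of_lt hr]

lemma interval_facts {n k : ℕ} (hk : 0 < k) (a : Fin n → ℕ)
    (B : ℕ → ℕ) (hB : ∀ i, B i = ∑ l ∈ Finset.univ.filter (fun l : Fin n => i ≤ (l : ℕ)), a l)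
    (m : ℕ → Fin k → ℕ)
    (hm : ∀ i (j : Fin k), m i j = B i / k + if (j : ℕ) < B i % k then 1 else 0)
    (lamMax : Fin k → Fin n → ℕ)
    (hlamMax : ∀ (t : Fin k) (s : Fin n), lamMax t s = m (s : ℕ) t - m ((s : ℕ) + 1) t)
    (muBar : Fin k → Fin n → ℕ) (hmu : ∀ s, ∑ t, muBar t s = a s)
    (i j : Fin n) (hij : i ≤ j) :
    ∃ q r : ℕ, r < k ∧
      ((∑ t, (∑ s ∈ Finset.Icc i j, muBar t s)) + B ((j : ℕ) + 1) = B (i : ℕ)) ∧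
      ((∑ t, (∑ s ∈ Finset.Icc i j, muBar t s)) = q * k + r) ∧
      (∀ t, q ≤ (∑ s ∈ Finset.Icc i j, lamMax t s) ∧
        (∑ s ∈ Finset.Icc i j, lamMax t s) ≤ q + 1) ∧
      ((∑ t, (∑ s ∈ Finset.Icc i j, lamMax t s)) = q * k + r) ∧
      (∀ t : Fin k, Mt muBar (i : ℕ) t
        = (∑ s ∈ Finset.Icc i j, muBar t s) + Mt muBar ((j : ℕ) + 1) t) := by
  have hmval : ∀ e t, m e t = mval k (B e) t := fun e t => hm e t
  have hsum_m : ∀ e, ∑ t, m e t = B e := by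
    intro e
    rw [Finset.sum_congr rfl (fun t _ => hmval e t)]
    exact sum_mval hk (B e)
  have hBanti : ∀ e, B (e + 1) ≤ B e := by
    intro e
    rw [hB, hB]
    apply Finset.sum_le_sum_of_subset
    intro s hs
    simp only [Finset.mem_filter, Finset.mem_univ, true_and] at hs ⊢
    omega
  have hmanti : ∀ e t, m (e + 1) t ≤ m e t := by
    intro e t
    rw [hmval, hmval]
    exact mval_mono hk (hBanti e) t
  have hije : (i : ℕ) ≤ (j : ℕ) + 1 := by
    have := hij; rw [Fin.le_def] at this; omega
  -- telescoping on the lamMax side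
  have htele : ∀ t, (∑ s ∈ Finset.Icc i j, lamMax t s) + m ((j : ℕ) + 1) t = m (i : ℕ) t := by
    intro t
    have h1 : (∑ s ∈ Finset.Icc i j, lamMax t s)
        = ∑ u ∈ Finset.Ico (i : ℕ) ((j : ℕ) + 1), (m u t - m (u + 1) t) := by
      rw [Finset.sum_congr rfl (fun s _ => hlamMax t s)]
      exact sum_Icc_fin (fun u => m u t - m (u + 1) t) i j
    rw [h1]
    exact tele_nat (fun u => m u t) (fun s => hmanti s t) ((j : ℕ) + 1) (i : ℕ) hije
  have hytot : (∑ t, (∑ s ∈ Finset.Icc i j, lamMax t s)) + B ((j : ℕ) + 1) = B (i : ℕ) := by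
    have h1 : ∑ t, ((∑ s ∈ Finset.Icc i j, lamMax t s) + m ((j : ℕ) + 1) t)
        = ∑ t, m (i : ℕ) t := Finset.sum_congr rfl (fun t _ => by rw [htele t])
    rw [Finset.sum_add_distrib, hsum_m, hsum_m] at h1
    exact h1
  -- the Mt relation on the muBar side
  have hIccfil : Finset.Icc i j
      = Finset.univ.filter (fun s : Fin n => (i : ℕ) ≤ (s : ℕ) ∧ (s : ℕ) < (j : ℕ) + 1) := by
    rw [Icc_eq_filter]
    ext s
    simp only [Finset.mem_filter, Finset.mem_univ, true_and]
    omega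
  have hxMt : ∀ t : Fin k, Mt muBar (i : ℕ) t
      = (∑ s ∈ Finset.Icc i j, muBar t s) + Mt muBar ((j : ℕ) + 1) t := by
    intro t
    rw [Mt_split muBar t hije, hIccfil]
  have hassum : ∀ e, ∑ t, Mt muBar e t = B e := by
    intro e
    unfold Mt
    rw [Finset.sum_comm, hB e]
    exact Finset.sum_congr rfl (fun s _ => hmu s)
  have hxtot : (∑ t, (∑ s ∈ Finset.Icc i j, muBar t s)) + B ((j : ℕ) + 1) = B (i : ℕ) := by
    have h1 : ∑ t, Mt muBar (i : ℕ) t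
        = ∑ t, ((∑ s ∈ Finset.Icc i j, muBar t s) + Mt muBar ((j : ℕ) + 1) t) :=
      Finset.sum_congr rfl (fun t _ => hxMt t)
    rw [hassum, Finset.sum_add_distrib, hassum] at h1
    omega
  set T := ∑ t, (∑ s ∈ Finset.Icc i j, lamMax t s) with hT
  refine ⟨T / k, T % k, Nat.mod_lt _ hk, ?_, ?_, ?_, ?_, hxMt⟩
  · omega
  · have hq := Nat.div_add_mod T k
    have : ∑ t, (∑ s ∈ Finset.Icc i j, muBar t s) = T := by omega
    rw [this]
    have hc : k * (T / k) = (T / k) * k := Nat.mul_comm _ _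
    omega
  · intro t
    have h1 := htele t
    have h2 : m (i : ℕ) t = mval k (B ((j : ℕ) + 1) + T) t := by
      rw [hmval]
      congr 1
      omega
    have h3 := mval_between hk (B ((j : ℕ) + 1)) T t
    rw [← hmval] at h3
    rw [h2] at h1
    omega
  · have hq := Nat.div_add_mod T k
    have hc : k * (T / k) = (T / k) * k := Nat.mul_comm _ _
    omega

theorem stmt_11 (n k : ℕ) (hk : 0 < k) (a : Fin n → ℕ)
    -- `B i = Σ_{ℓ ≥ i} a_ℓ`, the `i`-th ε-coordinate of `λ` (0-indexed)
    (B : ℕ → ℕ) (hB : ∀ i, B i = ∑ l ∈ Finset.univ.filter (fun l : Fin n => i ≤ (l : ℕ)), a l)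
    (m : ℕ → Fin k → ℕ)
    (hm : ∀ i (j : Fin k), m i j = B i / k + if (j : ℕ) < B i % k then 1 else 0)
    -- `λ̄^max` written in ω-coordinates
    (lamMax : Fin k → Fin n → ℕ)
    (hlamMax : ∀ (t : Fin k) (s : Fin n), lamMax t s = m (s : ℕ) t - m ((s : ℕ) + 1) t)
    (muBar : Fin k → Fin n → ℕ) (hmu : ∀ s, ∑ t, muBar t s = a s) :
    (∀ (i j : Fin n) (ℓ : ℕ), i ≤ j → 1 ≤ ℓ → ℓ ≤ k →
        orderR muBar i j ℓ ≤ orderR lamMax i j ℓ) ∧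
      ((∀ (i j : Fin n) (ℓ : ℕ), i ≤ j → 1 ≤ ℓ → ℓ ≤ k →
          orderR muBar i j ℓ = orderR lamMax i j ℓ) →
        ∃ σ : Equiv.Perm (Fin k), muBar = lamMax ∘ σ) := by
  have hORD : ∀ (i j : Fin n) (ℓ : ℕ), i ≤ j → 1 ≤ ℓ → ℓ ≤ k →
      ∃ q r : ℕ, r < k ∧
        ((∑ t, (∑ s ∈ Finset.Icc i j, muBar t s)) + B ((j : ℕ) + 1) = B (i : ℕ)) ∧
        ((∑ t, (∑ s ∈ Finset.Icc i j, muBar t s)) = q * k + r) ∧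
        orderR lamMax i j ℓ = ℓ * q + (ℓ + r - k) ∧
        (∀ t : Fin k, Mt muBar (i : ℕ) t
          = (∑ s ∈ Finset.Icc i j, muBar t s) + Mt muBar ((j : ℕ) + 1) t) := by
    intro i j ℓ hij hl1 hlk
    obtain ⟨q, r, hr, hxB, hxsum, hybd, hysum, hxMt⟩ :=
      interval_facts hk a B hB m hm lamMax hlamMax muBar hmu i j hij
    refine ⟨q, r, hr, hxB, hxsum, ?_, hxMt⟩
    rw [orderR_eq_minSub]
    exact minSub_balanced hk hr (fun t => (hybd t).1) (fun t => (hybd t).2) hysum hl1 hlk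
  have part1 : ∀ (i j : Fin n) (ℓ : ℕ), i ≤ j → 1 ≤ ℓ → ℓ ≤ k →
      orderR muBar i j ℓ ≤ orderR lamMax i j ℓ := by
    intro i j ℓ hij hl1 hlk
    obtain ⟨q, r, hr, hxB, hxsum, hyval, -⟩ := hORD i j ℓ hij hl1 hlk
    rw [hyval, orderR_eq_minSub]
    exact minSub_le_of_sum hk hr hxsum hl1 hlk
  refine ⟨part1, ?_⟩
  intro Heq
  rcases Nat.eq_zero_or_pos n with rfl | hn
  · refine ⟨1, ?_⟩
    funext t s
    exact s.elim0
  -- pointwise information per interval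
  have hPW : ∀ (i j : Fin n), i ≤ j →
      ∃ q r : ℕ, r < k ∧
        ((∑ t, (∑ s ∈ Finset.Icc i j, muBar t s)) + B ((j : ℕ) + 1) = B (i : ℕ)) ∧
        ((∑ t, (∑ s ∈ Finset.Icc i j, muBar t s)) = q * k + r) ∧
        (∀ t, q ≤ (∑ s ∈ Finset.Icc i j, muBar t s) ∧
          (∑ s ∈ Finset.Icc i j, muBar t s) ≤ q + 1) ∧
        (∀ t : Fin k, Mt muBar (i : ℕ) t
          = (∑ s ∈ Finset.Icc i j, muBar t s) + Mt muBar ((j : ℕ) + 1) t) := by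
    intro i j hij
    obtain ⟨q, r, hr, hxB, hxsum, hyval, hxMt⟩ := hORD i j k hij hk le_rfl
    refine ⟨q, r, hr, hxB, hxsum, ?_, hxMt⟩
    apply pointwise_of_minSub hk hr hxsum
    intro ℓ hl1 hlk
    obtain ⟨q', r', hr', hxB', hxsum', hyval', -⟩ := hORD i j ℓ hij hl1 hlk
    have hqq : q' = q ∧ r' = r := by
      have h1 : q' * k + r' = q * k + r := by omega
      have h2 := (div_mod_of hk h1 hr).1
      have h3 := (div_mod_of hk h1 hr).2
      have h4 := (div_mod_of hk (rfl : q' * k + r' = q' * k + r') hr').1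
      have h5 := (div_mod_of hk (rfl : q' * k + r' = q' * k + r') hr').2
      omega
    rw [← orderR_eq_minSub, Heq i j ℓ hij hl1 hlk, hyval', hqq.1, hqq.2]
  -- the last index
  have hlast : ∀ i : Fin n, i ≤ (⟨n - 1, by omega⟩ : Fin n) := by
    intro i
    rw [Fin.le_def]
    simp only []
    have := i.isLt
    omega
  have hBn : B n = 0 := by
    rw [hB]
    rw [Finset.filter_false_of_mem, Finset.sum_empty]
    intro s _
    simp only [not_le]
    exact s.isLt
  -- tail bounds
  have htail : ∀ i : Fin n, ∀ t, B (i : ℕ) / k ≤ Mt muBar (i : ℕ) t ∧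
      Mt muBar (i : ℕ) t ≤ B (i : ℕ) / k + 1 := by
    intro i t
    obtain ⟨q, r, hr, hxB, hxsum, hbd, hxMt⟩ := hPW i ⟨n - 1, by omega⟩ (hlast i)
    have hj1 : ((⟨n - 1, by omega⟩ : Fin n) : ℕ) + 1 = n := by
      simp only []
      omega
    rw [hj1] at hxB hxMt
    rw [hBn] at hxB
    have hMt0 := Mt_ge n k muBar t
    have hBi : B (i : ℕ) = q * k + r := by omega
    have hq := div_mod_of hk hBi hr
    have h1 := (hbd t).1
    have h2 := (hbd t).2
    have h3 := hxMt t
    omega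
  -- the sets of "big" rows at each level
  set A : ℕ → Finset (Fin k) :=
    fun e => Finset.univ.filter (fun t => Mt muBar e t = B e / k + 1) with hA
  have hMtA : ∀ (i : Fin n) (t : Fin k),
      Mt muBar (i : ℕ) t = B (i : ℕ) / k + (if t ∈ A (i : ℕ) then 1 else 0) := by
    intro i t
    have h1 := htail i t
    rw [hA]
    simp only [Finset.mem_filter, Finset.mem_univ, true_and]
    split <;> omega
  have hcardA : ∀ i : Fin n, (A (i : ℕ)).card = B (i : ℕ) % k := by
    intro i
    have hassum : ∑ t, Mt muBar (i : ℕ) t = B (i : ℕ) := by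
      unfold Mt
      rw [Finset.sum_comm, hB (i : ℕ)]
      exact Finset.sum_congr rfl (fun s _ => hmu s)
    have h0 : ∑ t, Mt muBar (i : ℕ) t
        = ∑ t : Fin k, (B (i : ℕ) / k + (if t ∈ A (i : ℕ) then 1 else 0)) :=
      Finset.sum_congr rfl (fun t _ => hMtA i t)
    rw [hassum, Finset.sum_add_distrib, Finset.sum_const, Finset.card_univ,
      Fintype.card_fin, smul_eq_mul] at h0
    have hb : (∑ t : Fin k, if t ∈ A (i : ℕ) then (1 : ℕ) else 0) = (A (i : ℕ)).card := by
      rw [Finset.sum_ite_mem, Finset.univ_inter, Finset.sum_const, smul_eq_mul, mul_one]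
    rw [hb] at h0
    have hdm := Nat.div_add_mod (B (i : ℕ)) k
    have hmlt : B (i : ℕ) % k < k := Nat.mod_lt _ hk
    omega
  -- chain condition
  have hchain : ∀ e e' : ℕ, e < n → e' < n → A e ⊆ A e' ∨ A e' ⊆ A e := by
    have main : ∀ e e' : ℕ, e < n → e' < n → e < e' → A e ⊆ A e' ∨ A e' ⊆ A e := by
      intro e e' hen hen' hee
      by_contra hcon
      push_neg at hcon
      obtain ⟨hns1, hns2⟩ := hcon
      obtain ⟨t, htA, htA'⟩ := Finset.not_subset.mp hns1
      obtain ⟨t', ht'A', ht'A⟩ := Finset.not_subset.mp hns2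
      set i : Fin n := ⟨e, hen⟩ with hi
      set i' : Fin n := ⟨e', hen'⟩ with hi'
      set j : Fin n := ⟨e' - 1, by omega⟩ with hj
      have hij : i ≤ j := by rw [Fin.le_def]; simp only [hi, hj]; omega
      have hj1 : ((j : ℕ) + 1) = e' := by simp only [hj]; omega
      obtain ⟨q, r, hr, hxB, hxsum, hbd, hxMt⟩ := hPW i j hij
      rw [hj1] at hxMt
      have hMt_i := hMtA i
      have hMt_i' := hMtA i'
      have h1 := hxMt t
      have h2 := hxMt t'
      rw [hMt_i t, hMt_i' t] at h1
      rw [hMt_i t', hMt_i' t'] at h2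
      have hival : (i : ℕ) = e := rfl
      have hi'val : (i' : ℕ) = e' := rfl
      rw [hival] at h1 h2
      rw [hi'val] at h1 h2
      rw [if_pos htA, if_neg htA'] at h1
      rw [if_neg ht'A, if_pos ht'A'] at h2
      have hb1 := (hbd t).1
      have hb2 := (hbd t).2
      have hb3 := (hbd t').1
      have hb4 := (hbd t').2
      omega
    intro e e' hen hen'
    rcases Nat.lt_trichotomy e e' with h | h | h
    · exact main e e' hen hen' h
    · subst h; left; exact Finset.Subset.refl _
    · exact (main e' e hen' hen h).symm
  -- the weight function
  set w : Fin k → ℕ := fun t => ((Finset.range n).filter (fun e => t ∈ A e)).card with hw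
  have hwle : ∀ t, w t ≤ n := by
    intro t
    rw [hw]
    refine le_trans (Finset.card_le_card (Finset.filter_subset _ _)) ?_
    simp
  have hup : ∀ e, e < n → ∀ t t', t ∈ A e → t' ∉ A e → w t' < w t := by
    intro e hen t t' ht ht'
    rw [hw]
    apply Finset.card_lt_card
    constructor
    · intro u hu
      rw [Finset.mem_filter] at hu ⊢
      refine ⟨hu.1, ?_⟩
      have hu2 := hu.2
      rcases hchain u e (Finset.mem_range.mp hu.1) hen with hsub | hsub
      · exact absurd (hsub hu2) ht'
      · exact hsub ht
    · intro hss
      have := hss (Finset.mem_filter.mpr ⟨Finset.mem_range.mpr hen, ht⟩)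
      rw [Finset.mem_filter] at this
      exact ht' this.2
  -- the ranking key
  set key : Fin k → ℕ := fun t => (n - w t) * k + (t : ℕ) with hkey
  have hkeyinj : Function.Injective key := by
    intro t t' he
    rw [hkey] at he
    simp only [] at he
    have h1 : ((n - w t) * k + (t : ℕ)) % k = ((n - w t') * k + (t' : ℕ)) % k := by rw [he]
    rw [Nat.mul_comm (n - w t) k, Nat.mul_comm (n - w t') k, Nat.mul_add_mod,
      Nat.mul_add_mod, Nat.mod_eq_of_lt t.isLt, Nat.mod_eq_of_lt t'.isLt] at h1
    exact Fin.ext h1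
  have hkeymono : ∀ t t', w t' < w t → key t < key t' := by
    intro t t' hww
    rw [hkey]
    simp only []
    have h1 : (n - w t) + 1 ≤ n - w t' := by
      have := hwle t
      omega
    have h2 : ((n - w t) + 1) * k ≤ (n - w t') * k := Nat.mul_le_mul_right k h1
    have h3 : (t : ℕ) < k := t.isLt
    have h4 : ((n - w t) + 1) * k = (n - w t) * k + k := by ring
    omega
  obtain ⟨σ, hσ⟩ := rank_perm key hkeyinj
  have hsigma : ∀ e, e < n → ∀ t, ((σ t : ℕ) < B e % k ↔ t ∈ A e) := by
    intro e hen t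
    have hcard : (A e).card = B e % k := hcardA ⟨e, hen⟩
    constructor
    · -- contrapositive: if t ∉ A e then σ t ≥ card (A e)
      intro hlt
      by_contra htA
      have hsub : A e ⊆ Finset.univ.filter (fun t' => key t' < key t) := by
        intro u hu
        rw [Finset.mem_filter]
        exact ⟨Finset.mem_univ u, hkeymono u t (hup e hen u t hu htA)⟩
      have := Finset.card_le_card hsub
      rw [hcard, ← hσ t] at this
      omega
    · intro htA
      have hsub : Finset.univ.filter (fun t' => key t' < key t) ⊆ (A e).erase t := by
        intro u hu
        rw [Finset.mem_filter] at hu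
        rw [Finset.mem_erase]
        constructor
        · intro hc
          subst hc
          omega
        · by_contra huA
          have := hkeymono t u (hup e hen t u htA huA)
          omega
      have h1 := Finset.card_le_card hsub
      rw [Finset.card_erase_of_mem htA, hcard] at h1
      have h2 : 1 ≤ B e % k := by
        have : 0 < (A e).card := Finset.card_pos.mpr ⟨t, htA⟩
        omega
      have h3 := hσ t
      omega
  have hMt_m : ∀ e, e ≤ n → ∀ t, Mt muBar e t = m e (σ t) := by
    intro e hen t
    rcases Nat.lt_or_ge e n with h | h
    · have h1 := hMtA ⟨e, h⟩ t
      have h2 := hm e (σ t)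
      have h3 := hsigma e h t
      rw [h1, h2]
      congr 1
      rcases Nat.decEq 0 0 with _ | _
      · by_cases hc : t ∈ A e
        · rw [if_pos hc, if_pos (h3.mpr hc)]
        · rw [if_neg hc, if_neg (fun hx => hc (h3.mp hx))]
      · by_cases hc : t ∈ A e
        · rw [if_pos hc, if_pos (h3.mpr hc)]
        · rw [if_neg hc, if_neg (fun hx => hc (h3.mp hx))]
    · have he : e = n := by omega
      subst he
      rw [Mt_ge, hm, hBn]
      simp
  refine ⟨σ, ?_⟩
  funext t s
  simp only [Function.comp_apply]
  have hsplit := Mt_split muBar t (show (s : ℕ) ≤ (s : ℕ) + 1 by omega)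
  have hfil : Finset.univ.filter (fun u : Fin n => (s : ℕ) ≤ (u : ℕ) ∧ (u : ℕ) < (s : ℕ) + 1)
      = {s} := by
    ext u
    simp only [Finset.mem_filter, Finset.mem_univ, true_and, Finset.mem_singleton]
    constructor
    · intro h
      exact Fin.ext (by omega)
    · intro h
      subst h
      omega
  rw [hfil, Finset.sum_singleton] at hsplit
  have h1 := hMt_m (s : ℕ) (by omega) t
  have h2 := hMt_m ((s : ℕ) + 1) (by exact s.isLt) t
  have h3 := hlamMax (σ t) s
  omega
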